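/- Let T be an invertible real 2n×2n symplectic matrix (Tᵀ J_{2n} T = J_{2n}), let Ω be a real orthogonal 2n×2n matrix satisfying Ωᵀ J_{2n} Ω = J̃_{2n}, and let R be an upper triangular 2n×2n real matrix with strictly positive diagonal entries such that Q := T Ω R⁻¹ is orthogonal (i.e., T Ω = Q R is a QR factorization). Then the matrix N := T Ω R⁻¹ Ωᵀ is symplectic, i.e., Nᵀ J_{2n} N = J_{2n}, and consequently N commutes with J_{2n}: J_{2n} N = N J_{2n}. -/

import Mathlib

open Matrix

/-- The standard symplectic matrix `J_{2n} = [[0, -I_n],[I_n, 0]]` as a `2n × 2n` real matrix. -/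
noncomputable def Jmat (n : ℕ) : Matrix (Fin (2*n)) (Fin (2*n)) ℝ :=
  fun i j => if (i : ℕ) + n = (j : ℕ) then -1 else if (j : ℕ) + n = (i : ℕ) then 1 else 0

/-- The antidiagonal matrix `Ĩ_n` with ones on the antidiagonal. -/
noncomputable def Itilde (n : ℕ) : Matrix (Fin n) (Fin n) ℝ :=
  fun i j => if (i : ℕ) + (j : ℕ) + 1 = n then 1 else 0

/-- The matrix `J̃_{2n} = [[0, -Ĩ_n],[Ĩ_n, 0]]`. -/
noncomputable def Jtilde (n : ℕ) : Matrix (Fin (2*n)) (Fin (2*n)) ℝ :=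
  fun i j => if (i : ℕ) + (j : ℕ) + 1 = 2*n then (if (i : ℕ) < n then -1 else 1) else 0

section helpers
open Finset

noncomputable def eps' (n : ℕ) (i : Fin (2*n)) : ℝ := if (i:ℕ) < n then -1 else 1

def rv (n : ℕ) (i : Fin (2*n)) : Fin (2*n) := ⟨2*n-1-(i:ℕ), by have := i.isLt; omega⟩

def sg (n : ℕ) (i : Fin (2*n)) : Fin (2*n) :=
  ⟨if (i:ℕ) < n then (i:ℕ)+n else (i:ℕ)-n, by have := i.isLt; split_ifs <;> omega⟩

lemma sg_val (n : ℕ) (i : Fin (2*n)) :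
    (sg n i : ℕ) = if (i:ℕ) < n then (i:ℕ)+n else (i:ℕ)-n := rfl

lemma rv_val (n : ℕ) (i : Fin (2*n)) : (rv n i : ℕ) = 2*n-1-(i:ℕ) := rfl

lemma Jmat_apply (n : ℕ) (i j : Fin (2*n)) :
    Jmat n i j = if j = sg n i then eps' n i else 0 := by
  have hi := i.isLt; have hj := j.isLt
  unfold Jmat eps'
  simp only [show (j = sg n i) ↔ ((j:ℕ) = (sg n i : ℕ)) from Fin.ext_iff, sg_val]
  split_ifs <;> (first | rfl | (exfalso; omega))

lemma Jtilde_apply (n : ℕ) (i j : Fin (2*n)) :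
    Jtilde n i j = if j = rv n i then eps' n i else 0 := by
  have hi := i.isLt; have hj := j.isLt
  unfold Jtilde eps'
  simp only [show (j = rv n i) ↔ ((j:ℕ) = (rv n i : ℕ)) from Fin.ext_iff, rv_val]
  split_ifs <;> (first | rfl | (exfalso; omega))

lemma rv_rv (n : ℕ) (i : Fin (2*n)) : rv n (rv n i) = i := by
  have := i.isLt; apply Fin.ext; rw [rv_val, rv_val]; omega

lemma eps_rv (n : ℕ) (i : Fin (2*n)) : eps' n (rv n i) = -eps' n i := by
  have := i.isLt; unfold eps'; rw [rv_val]; split_ifs <;> (first | (exfalso; omega) | norm_num)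

lemma sg_sg (n : ℕ) (i : Fin (2*n)) : sg n (sg n i) = i := by
  have := i.isLt; apply Fin.ext; rw [sg_val, sg_val]; split_ifs <;> omega

lemma eps_sg (n : ℕ) (i : Fin (2*n)) : eps' n (sg n i) = -eps' n i := by
  have := i.isLt; unfold eps'; rw [sg_val]; split_ifs <;> (first | (exfalso; omega) | norm_num)

lemma Jmul (n : ℕ) (B : Matrix (Fin (2*n)) (Fin (2*n)) ℝ) (k j : Fin (2*n)) :
    (Jmat n * B) k j = eps' n k * B (sg n k) j := by
  rw [mul_apply]
  rw [Finset.sum_eq_single (sg n k)]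
  · rw [Jmat_apply, if_pos rfl]
  · intro b _ hb; rw [Jmat_apply, if_neg hb, zero_mul]
  · simp

lemma Jtmul (n : ℕ) (B : Matrix (Fin (2*n)) (Fin (2*n)) ℝ) (k j : Fin (2*n)) :
    (Jtilde n * B) k j = eps' n k * B (rv n k) j := by
  rw [mul_apply]
  rw [Finset.sum_eq_single (rv n k)]
  · rw [Jtilde_apply, if_pos rfl]
  · intro b _ hb; rw [Jtilde_apply, if_neg hb, zero_mul]
  · simp

lemma eps_sq (n : ℕ) (i : Fin (2*n)) : eps' n i * eps' n i = 1 := by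
  unfold eps'; split_ifs <;> norm_num

lemma JJ (n : ℕ) : Jmat n * Jmat n = -1 := by
  ext k j
  rw [Jmul, Jmat_apply, sg_sg, eps_sg, Matrix.neg_apply, Matrix.one_apply]
  by_cases h : j = k
  · subst h; rw [if_pos rfl, if_pos rfl, mul_neg, eps_sq]
  · rw [if_neg h, if_neg (fun hh => h hh.symm), mul_zero, neg_zero]

lemma JtJt (n : ℕ) : Jtilde n * Jtilde n = -1 := by
  ext k j
  rw [Jtmul, Jtilde_apply, rv_rv, eps_rv, Matrix.neg_apply, Matrix.one_apply]
  by_cases h : j = k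
  · subst h; rw [if_pos rfl, if_pos rfl, mul_neg, eps_sq]
  · rw [if_neg h, if_neg (fun hh => h hh.symm), mul_zero, neg_zero]

end helpers

/-- if `T` is an invertible symplectic matrix, `Ω` is orthogonal with
`Ωᵀ J Ω = J̃`, `R` is upper triangular with strictly positive diagonal and
`Q = T Ω R⁻¹` is orthogonal, then `N = T Ω R⁻¹ Ωᵀ` is symplectic and commutes with `J`. -/
theorem numerical_dynamics_symplectic (n : ℕ)
    (T Ω R : Matrix (Fin (2*n)) (Fin (2*n)) ℝ)
    (hTinv : IsUnit T.det)
    (hTsymp : Tᵀ * Jmat n * T = Jmat n)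
    (hΩorth : Ωᵀ * Ω = 1)
    (hΩJ : Ωᵀ * Jmat n * Ω = Jtilde n)
    (hRtri : ∀ i j : Fin (2*n), (j : ℕ) < (i : ℕ) → R i j = 0)
    (hRdiag : ∀ i : Fin (2*n), 0 < R i i)
    (hQorth : (T * Ω * R⁻¹)ᵀ * (T * Ω * R⁻¹) = 1) :
    (T * Ω * R⁻¹ * Ωᵀ)ᵀ * Jmat n * (T * Ω * R⁻¹ * Ωᵀ) = Jmat n ∧
    Jmat n * (T * Ω * R⁻¹ * Ωᵀ) = (T * Ω * R⁻¹ * Ωᵀ) * Jmat n := by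
  -- R is invertible
  have hRblock : R.BlockTriangular id := fun i j h => hRtri i j h
  have hdet : IsUnit R.det := by
    rw [Matrix.det_of_upperTriangular hRblock, isUnit_iff_ne_zero]
    exact ne_of_gt (Finset.prod_pos fun i _ => hRdiag i)
  have hRA : R * R⁻¹ = 1 := Matrix.mul_nonsing_inv R hdet
  have hAR : R⁻¹ * R = 1 := Matrix.nonsing_inv_mul R hdet
  -- R⁻¹ is upper triangular
  have hAblock : R⁻¹.BlockTriangular id := by
    have := R.invertibleOfIsUnitDet hdet
    exact Matrix.blockTriangular_inv_of_blockTriangular hRblock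
  have hAtri : ∀ i j : Fin (2*n), (j : ℕ) < (i : ℕ) → R⁻¹ i j = 0 := fun i j h => hAblock h
  -- diagonal of R⁻¹
  have hdiag : ∀ i : Fin (2*n), R i i * R⁻¹ i i = 1 := by
    intro i
    have h := congrFun (congrFun hRA i) i
    rw [Matrix.mul_apply, Finset.sum_eq_single i] at h
    · simpa using h
    · intro k _ hk
      rcases lt_or_gt_of_ne (fun hv => hk (Fin.ext hv) : (k:ℕ) ≠ (i:ℕ)) with h' | h'
      · rw [hRtri i k h', zero_mul]
      · rw [hAtri k i h', mul_zero]
    · simp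
  -- Q orthogonality both ways
  have hQQ : (T * Ω * R⁻¹) * (T * Ω * R⁻¹)ᵀ = 1 := mul_eq_one_comm.mp hQorth
  have hΩΩ : Ω * Ωᵀ = 1 := mul_eq_one_comm.mp hΩorth
  -- S := R⁻¹ᵀ J̃ R⁻¹ equals Qᵀ J Q
  have hQJQ : (T * Ω * R⁻¹)ᵀ * Jmat n * (T * Ω * R⁻¹) = R⁻¹ᵀ * Jtilde n * R⁻¹ := by
    have e1 : (T * Ω * R⁻¹)ᵀ * Jmat n * (T * Ω * R⁻¹)
        = R⁻¹ᵀ * (Ωᵀ * (Tᵀ * Jmat n * T) * Ω) * R⁻¹ := by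
      simp only [Matrix.transpose_mul, Matrix.mul_assoc]
    rw [e1, hTsymp, hΩJ]
  set S := R⁻¹ᵀ * Jtilde n * R⁻¹ with hSdef
  have hSS : S * S = -1 := by
    rw [← hQJQ]
    have e : ((T * Ω * R⁻¹)ᵀ * Jmat n * (T * Ω * R⁻¹)) * ((T * Ω * R⁻¹)ᵀ * Jmat n * (T * Ω * R⁻¹))
        = (T * Ω * R⁻¹)ᵀ * (Jmat n * (((T * Ω * R⁻¹) * (T * Ω * R⁻¹)ᵀ) * (Jmat n * (T * Ω * R⁻¹)))) := by
      simp only [Matrix.mul_assoc]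
    rw [e, hQQ, one_mul, ← Matrix.mul_assoc (Jmat n), JJ, neg_one_mul, Matrix.mul_neg, hQorth]
  -- S = R J̃ Rᵀ
  have hS2 : R * Jtilde n * Rᵀ = S := by
    have h1 : S * (R * Jtilde n * Rᵀ) = -1 := by
      have e : S * (R * Jtilde n * Rᵀ)
          = R⁻¹ᵀ * (Jtilde n * ((R⁻¹ * R) * (Jtilde n * Rᵀ))) := by
        rw [hSdef]; simp only [Matrix.mul_assoc]
      rw [e, hAR, one_mul, ← Matrix.mul_assoc (Jtilde n), JtJt, neg_one_mul, Matrix.mul_neg,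
        ← Matrix.transpose_mul, hRA, Matrix.transpose_one]
    have hnS : (-S) * S = 1 := by rw [neg_mul, hSS, neg_neg]
    have h2 : (-S) * (S * (R * Jtilde n * Rᵀ)) = (-S) * (S * S) := by rw [h1, hSS]
    rwa [← Matrix.mul_assoc (-S) S (R * Jtilde n * Rᵀ), ← Matrix.mul_assoc (-S) S S, hnS, one_mul, one_mul] at h2
  -- S = J̃ entrywise
  have hSJt : S = Jtilde n := by
    ext i j
    have hi := i.isLt; have hj := j.isLt
    have fA : S i j = ∑ k, R⁻¹ k i * (eps' n k * R⁻¹ (rv n k) j) := by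
      rw [hSdef, Matrix.mul_assoc, Matrix.mul_apply]
      exact Finset.sum_congr rfl fun k _ => by rw [Matrix.transpose_apply, Jtmul]
    have fR : S i j = ∑ k, R i k * (eps' n k * R j (rv n k)) := by
      rw [← hS2, Matrix.mul_assoc, Matrix.mul_apply]
      exact Finset.sum_congr rfl fun k _ => by rw [Jtmul, Matrix.transpose_apply]
    rcases lt_trichotomy ((i:ℕ) + (j:ℕ) + 1) (2*n) with hlt | heq | hgt
    · rw [fA, Finset.sum_eq_zero, Jtilde, if_neg (by omega)]
      intro k _
      by_cases hk : (i:ℕ) < (k:ℕ)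
      · rw [hAtri k i hk, zero_mul]
      · rw [hAtri (rv n k) j (by rw [rv_val]; have := k.isLt; omega), mul_zero, mul_zero]
    · have hrvi : rv n i = j := by apply Fin.ext; rw [rv_val]; omega
      have cA : S i j = R⁻¹ i i * (eps' n i * R⁻¹ j j) := by
        rw [fA, Finset.sum_eq_single i]
        · rw [hrvi]
        · intro k _ hk
          rcases lt_or_gt_of_ne (fun hv => hk (Fin.ext hv) : (k:ℕ) ≠ (i:ℕ)) with h' | h'
          · rw [hAtri (rv n k) j (by rw [rv_val]; omega), mul_zero, mul_zero]
          · rw [hAtri k i h', zero_mul]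
        · simp
      have cR : S i j = R i i * (eps' n i * R j j) := by
        rw [fR, Finset.sum_eq_single i]
        · rw [hrvi]
        · intro k _ hk
          rcases lt_or_gt_of_ne (fun hv => hk (Fin.ext hv) : (k:ℕ) ≠ (i:ℕ)) with h' | h'
          · rw [hRtri i k h', zero_mul]
          · rw [hRtri j (rv n k) (by rw [rv_val]; have := k.isLt; omega), mul_zero, mul_zero]
        · simp
      have hJt : Jtilde n i j = eps' n i := by rw [Jtilde, eps']; rw [if_pos heq]
      rw [hJt, cR]
      have h1 := hdiag i
      have h2 := hdiag j
      have hii := hRdiag i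
      have hjj := hRdiag j
      have hveps : eps' n i ≠ 0 := by unfold eps'; split_ifs <;> norm_num
      have hab : R⁻¹ i i * R⁻¹ j j = R i i * R j j := by
        have h' : eps' n i * (R⁻¹ i i * R⁻¹ j j) = eps' n i * (R i i * R j j) := by
          linear_combination cA.symm.trans cR
        exact mul_left_cancel₀ hveps h'
      have hpq : (R i i * R j j) * (R⁻¹ i i * R⁻¹ j j) = 1 := by
        linear_combination (R j j * R⁻¹ j j) * h1 + h2
      rw [hab] at hpq
      have key : R i i * R j j = 1 := by
        rcases mul_self_eq_one_iff.mp hpq with hk | hk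
        · exact hk
        · exfalso; nlinarith [mul_pos hii hjj]
      linear_combination eps' n i * key
    · rw [fR, Finset.sum_eq_zero, Jtilde, if_neg (by omega)]
      intro k _
      by_cases hk : (k:ℕ) < (i:ℕ)
      · rw [hRtri i k hk, zero_mul]
      · rw [hRtri j (rv n k) (by rw [rv_val]; have := k.isLt; omega), mul_zero, mul_zero]
  -- first part
  have hOJO : Ω * Jtilde n * Ωᵀ = Jmat n := by
    have e : Ω * (Ωᵀ * Jmat n * Ω) * Ωᵀ = (Ω * Ωᵀ) * (Jmat n * (Ω * Ωᵀ)) := by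
      simp only [Matrix.mul_assoc]
    rw [← hΩJ, e, hΩΩ, one_mul, mul_one]
  have part1 : (T * Ω * R⁻¹ * Ωᵀ)ᵀ * Jmat n * (T * Ω * R⁻¹ * Ωᵀ) = Jmat n := by
    have e : (T * Ω * R⁻¹ * Ωᵀ)ᵀ * Jmat n * (T * Ω * R⁻¹ * Ωᵀ)
        = Ω * ((T * Ω * R⁻¹)ᵀ * Jmat n * (T * Ω * R⁻¹)) * Ωᵀ := by
      simp only [Matrix.transpose_mul, Matrix.transpose_transpose, Matrix.mul_assoc]
    rw [e, hQJQ, hSJt, hOJO]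
  refine ⟨part1, ?_⟩
  -- N is orthogonal
  have hNN : (T * Ω * R⁻¹ * Ωᵀ) * (T * Ω * R⁻¹ * Ωᵀ)ᵀ = 1 := by
    have e : (T * Ω * R⁻¹ * Ωᵀ) * (T * Ω * R⁻¹ * Ωᵀ)ᵀ
        = (T * Ω * R⁻¹) * ((Ωᵀ * Ω) * (T * Ω * R⁻¹)ᵀ) := by
      simp only [Matrix.transpose_mul, Matrix.transpose_transpose, Matrix.mul_assoc]
    rw [e, hΩorth, one_mul, hQQ]
  calc Jmat n * (T * Ω * R⁻¹ * Ωᵀ)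
      = ((T * Ω * R⁻¹ * Ωᵀ) * (T * Ω * R⁻¹ * Ωᵀ)ᵀ) * (Jmat n * (T * Ω * R⁻¹ * Ωᵀ)) := by
        rw [hNN, one_mul]
    _ = (T * Ω * R⁻¹ * Ωᵀ) * ((T * Ω * R⁻¹ * Ωᵀ)ᵀ * Jmat n * (T * Ω * R⁻¹ * Ωᵀ)) := by
        simp only [Matrix.mul_assoc]
    _ = (T * Ω * R⁻¹ * Ωᵀ) * Jmat n := by rw [part1]
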